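/- In the lower-bound construction, there exist a subset F of the edges of the augmented graph G with maximum degree at most f (namely all edges of G with both endpoints in B_0) and two points b_0, b_f ∈ S such that the shortest-path distance between b_0 and b_f in G \ F is at least f times the shortest-path distance between b_0 and b_f in K_S \ F. Hence the stretch factor of the construction is Ω(f·t) in general. -/

import Mathlib

open Real

/-- Length of a walk in a graph whose vertices lie in a metric space:
the sum of the metric distances of consecutive vertices. -/
noncomputable def wlen {V : Type*} [PseudoMetricSpace V] {G : SimpleGraph V} {u v : V}
    (w : G.Walk u v) : ℝ :=
  (w.darts.map fun d : G.Dart => dist d.toProd.1 d.toProd.2).sum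

/-- Shortest-path distance between two vertices of a metrically weighted graph. -/
noncomputable def gdist {V : Type*} [PseudoMetricSpace V] (G : SimpleGraph V) (p q : V) : ℝ :=
  sInf {l : ℝ | ∃ w : G.Walk p q, wlen w = l}

/-- The set `F` of edges, viewed as a graph, has maximum degree at most `f`. -/
def maxDegLe {V : Type*} (F : Set (Sym2 V)) (f : ℕ) : Prop :=
  ∀ v : V, {e | e ∈ F ∧ v ∈ e}.encard ≤ (f : ℕ∞)

/-- Length of a walk in an edge-weighted graph: the sum of the weights of its edges. -/
noncomputable def wlenW {V : Type*} (wt : V → V → ℝ) {G : SimpleGraph V} {u v : V}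
    (w : G.Walk u v) : ℝ :=
  (w.darts.map fun d : G.Dart => wt d.toProd.1 d.toProd.2).sum

/-- Shortest-path distance between two vertices of an edge-weighted graph. -/
noncomputable def gdistW {V : Type*} (G : SimpleGraph V) (wt : V → V → ℝ) (p q : V) : ℝ :=
  sInf {l : ℝ | ∃ w : G.Walk p q, wlenW wt w = l}

section aux
variable {V : Type*} {G₀ : SimpleGraph V} {W : V → V → ℝ}

lemma wlenW_nil {p : V} : wlenW W (SimpleGraph.Walk.nil : G₀.Walk p p) = 0 := by
  simp [wlenW]

lemma wlenW_cons {p u q : V} (h : G₀.Adj p u) (w : G₀.Walk u q) :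
    wlenW W (SimpleGraph.Walk.cons h w) = W p u + wlenW W w := by
  simp [wlenW]

lemma wlenW_nonneg (h : ∀ x y, G₀.Adj x y → 0 ≤ W x y) :
    ∀ {p q : V} (w : G₀.Walk p q), 0 ≤ wlenW W w := by
  intro p q w
  induction w with
  | nil => simp [wlenW_nil]
  | cons hadj w ih => rw [wlenW_cons]; exact add_nonneg (h _ _ hadj) ih

lemma wlenW_lb {ψ : V → ℝ} (h : ∀ x y, G₀.Adj x y → |ψ x - ψ y| ≤ W x y) :
    ∀ {p q : V} (w : G₀.Walk p q), |ψ p - ψ q| ≤ wlenW W w := by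
  intro p q w
  induction w with
  | nil => simp [wlenW_nil]
  | @cons p u q hadj w ih =>
      rw [wlenW_cons]
      calc |ψ p - ψ q| ≤ |ψ p - ψ u| + |ψ u - ψ q| := abs_sub_le _ _ _
        _ ≤ W p u + wlenW W w := add_le_add (h _ _ hadj) ih

lemma gdistW_le_wlenW (h : ∀ x y, G₀.Adj x y → 0 ≤ W x y) {p q : V} (w : G₀.Walk p q) :
    gdistW G₀ W p q ≤ wlenW W w := by
  apply csInf_le
  · exact ⟨0, by rintro l ⟨w', rfl⟩; exact wlenW_nonneg h w'⟩
  · exact ⟨w, rfl⟩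

lemma le_gdistW {c : ℝ} {p q : V} (w₀ : G₀.Walk p q)
    (h : ∀ w : G₀.Walk p q, c ≤ wlenW W w) : c ≤ gdistW G₀ W p q :=
  le_csInf ⟨_, w₀, rfl⟩ (by rintro l ⟨w, rfl⟩; exact h w)

lemma gdistW_nonneg (h : ∀ x y, G₀.Adj x y → 0 ≤ W x y) (p q : V) :
    0 ≤ gdistW G₀ W p q :=
  Real.sInf_nonneg (by rintro l ⟨w, rfl⟩; exact wlenW_nonneg h w)

lemma abs_potential_le_gdistW {ψ : V → ℝ}
    (h : ∀ x y, G₀.Adj x y → |ψ x - ψ y| ≤ W x y) {p q : V} (w₀ : G₀.Walk p q) :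
    |ψ p - ψ q| ≤ gdistW G₀ W p q :=
  le_gdistW w₀ (fun w => wlenW_lb h w)

lemma gdistW_sep {c : ℝ} (hc : 0 ≤ c) (h : ∀ x y, G₀.Adj x y → c ≤ W x y)
    {p q : V} (hpq : p ≠ q) (w₀ : G₀.Walk p q) : c ≤ gdistW G₀ W p q := by
  apply le_gdistW w₀
  intro w
  cases w with
  | nil => exact absurd rfl hpq
  | cons hadj w' =>
      rw [wlenW_cons]
      have := wlenW_nonneg (fun x y hxy => le_trans hc (h x y hxy)) w'
      have := h _ _ hadj
      linarith

lemma exists_mem_not_mem {S C : Set V} (hcard : C.ncard ≤ S.ncard)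
    (hSfin : S.Finite) (hCfin : C.Finite) {z : V} (hz : z ∈ C) (hzS : z ∉ S) :
    ∃ y ∈ S, y ∉ C := by
  by_contra h
  push_neg at h
  have h1 : insert z S ⊆ C := Set.insert_subset hz h
  have h2 := Set.ncard_le_ncard h1 hCfin
  rw [Set.ncard_insert_of_notMem hzS hSfin] at h2
  omega

open Classical in
noncomputable def phi (f : ℕ) (b : ℕ → V) (B : ℕ → Set V) (β γ : ℕ → ℝ) (v : V) : ℝ :=
  if h : ∃ i, 1 ≤ i ∧ i ≤ f ∧ v ∈ B i then β h.choose
  else if h2 : ∃ j, j ≤ f ∧ v = b j then γ h2.choose else 0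

lemma phi_mem {f : ℕ} {b : ℕ → V} {B : ℕ → Set V}
    (hBdisj : ∀ i j, 1 ≤ i → i ≤ f → 1 ≤ j → j ≤ f → i ≠ j → B i ∩ B j = ∅)
    (β γ : ℕ → ℝ) {i : ℕ} {v : V} (hi1 : 1 ≤ i) (hi2 : i ≤ f) (hv : v ∈ B i) :
    phi f b B β γ v = β i := by
  have hex : ∃ i', 1 ≤ i' ∧ i' ≤ f ∧ v ∈ B i' := ⟨i, hi1, hi2, hv⟩
  rw [phi]
  rw [dif_pos hex]
  obtain ⟨h1', h2', hv'⟩ := hex.choose_spec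
  congr 1
  by_contra hne
  have := hBdisj hex.choose i h1' h2' hi1 hi2 hne
  exact absurd (this ▸ (Set.mem_inter hv' hv)) (Set.notMem_empty v)

lemma phi_b {f : ℕ} {b : ℕ → V} {B : ℕ → Set V}
    (hbB : ∀ i, 1 ≤ i → i ≤ f → ∀ j ≤ f, b j ∉ B i)
    (hbinj : ∀ i ≤ f, ∀ j ≤ f, b i = b j → i = j)
    (β γ : ℕ → ℝ) {j : ℕ} (hj : j ≤ f) : phi f b B β γ (b j) = γ j := by
  have hne : ¬∃ i, 1 ≤ i ∧ i ≤ f ∧ b j ∈ B i := by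
    rintro ⟨i, hi1, hi2, hmem⟩
    exact hbB i hi1 hi2 j hj hmem
  have hex : ∃ k, k ≤ f ∧ b j = b k := ⟨j, hj, rfl⟩
  rw [phi]
  rw [dif_neg hne, dif_pos hex]
  obtain ⟨hk, he⟩ := hex.choose_spec
  congr 1
  exact (hbinj j hj _ hk he).symm

end aux

theorem stmt18
    {V : Type*} [Fintype V] (f : ℕ) (hf : 3 ≤ f) (ε : ℝ)
    (hε0 : 0 < ε) (hε1 : ε * ((f : ℝ) - 2) < 1)
    -- the points b_0, ..., b_f (forming B_0) and the sets B_1, ..., B_f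
    (b : ℕ → V) (B : ℕ → Set V)
    (hbinj : ∀ i ≤ f, ∀ j ≤ f, b i = b j → i = j)
    (hBcard : ∀ i, 1 ≤ i → i ≤ f → (B i).ncard = 2 * f)
    (hBdisj : ∀ i j, 1 ≤ i → i ≤ f → 1 ≤ j → j ≤ f → i ≠ j → B i ∩ B j = ∅)
    (hbB : ∀ i, 1 ≤ i → i ≤ f → ∀ j ≤ f, b j ∉ B i)
    (hcover : ∀ v : V, (∃ j ≤ f, v = b j) ∨ ∃ i, 1 ≤ i ∧ i ≤ f ∧ v ∈ B i)
    -- the edges of the graph H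
    (H : SimpleGraph V)
    (hH : ∀ x y : V, H.Adj x y ↔
      s(x, y) = s(b 0, b f) ∨
      s(x, y) = s(b 0, b 1) ∨
      s(x, y) = s(b (f - 1), b f) ∨
      (∃ j, 1 ≤ j ∧ j ≤ f - 2 ∧ s(x, y) = s(b j, b (j + 1))) ∨
      (∃ i, 1 ≤ i ∧ i ≤ f ∧ x ∈ B i ∧ y ∈ B i ∧ x ≠ y) ∨
      (∃ i, 1 ≤ i ∧ i ≤ f ∧
        ((x ∈ B i ∧ (y = b (i - 1) ∨ y = b i)) ∨ (y ∈ B i ∧ (x = b (i - 1) ∨ x = b i)))))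
    -- the edge weights of H
    (wt : V → V → ℝ) (hwtsymm : ∀ x y, wt x y = wt y x)
    (hw1 : wt (b 0) (b f) = 1 + ε)
    (hw2 : wt (b 0) (b 1) = 1) (hw3 : wt (b (f - 1)) (b f) = 1)
    (hw4 : ∀ j, 1 ≤ j → j ≤ f - 2 → wt (b j) (b (j + 1)) = ε)
    (hw5 : ∀ i, 1 ≤ i → i ≤ f → ∀ x ∈ B i, ∀ y ∈ B i, x ≠ y → wt x y = ε)
    (hw6 : ∀ i, 1 ≤ i → i ≤ f → ∀ x ∈ B i, wt x (b (i - 1)) = 1 ∧ wt x (b i) = 1)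
    -- the augmented graph G, built from G' = H minus {b_0, b_f} using the
    -- shortest-path metric dH of H
    (G : SimpleGraph V) (C : V → V → Set V)
    (hCsub : ∀ a c, (H.deleteEdges {s(b 0, b f)}).Adj a c → C a c ⊆ ({a, c} : Set V)ᶜ)
    (hCsymm : ∀ a c, C a c = C c a)
    (hCcard : ∀ a c, (H.deleteEdges {s(b 0, b f)}).Adj a c → (C a c).ncard = 2 * f - 1)
    (hCmin : ∀ a c, (H.deleteEdges {s(b 0, b f)}).Adj a c →
      ∀ z ∈ C a c, ∀ x : V, x ≠ a → x ≠ c → x ∉ C a c →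
        gdistW H wt a z + gdistW H wt z c ≤ gdistW H wt a x + gdistW H wt x c)
    (hG : ∀ x y : V, G.Adj x y ↔ (H.deleteEdges {s(b 0, b f)}).Adj x y ∨
      ∃ a c : V, (H.deleteEdges {s(b 0, b f)}).Adj a c ∧
        ((x = a ∧ y ∈ C a c) ∨ (x = c ∧ y ∈ C a c) ∨
         (y = a ∧ x ∈ C a c) ∨ (y = c ∧ x ∈ C a c))) :
    -- there is a fault set F of maximum degree at most f (namely all edges of G
    -- with both endpoints in B_0 = {b_0, ..., b_f}) witnessing stretch at least f
    ∃ F : Set (Sym2 V), F ⊆ G.edgeSet ∧ maxDegLe F f ∧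
      (∀ e : Sym2 V, e ∈ F ↔ e ∈ G.edgeSet ∧ ∀ v ∈ e, ∃ j ≤ f, v = b j) ∧
      (f : ℝ) * gdistW ((⊤ : SimpleGraph V).deleteEdges F) (fun x y => gdistW H wt x y)
          (b 0) (b f) ≤
        gdistW (G.deleteEdges F) (fun x y => gdistW H wt x y) (b 0) (b f) := by
  classical
  have hfR : (3:ℝ) ≤ (f:ℝ) := by exact_mod_cast hf
  have hεle1 : ε ≤ 1 := by nlinarith
  -- basic injectivity helpers
  have hbne : ∀ j k, j ≤ f → k ≤ f → j ≠ k → b j ≠ b k := by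
    intro j k hj hk hne he; exact hne (hbinj j hj k hk he)
  have hxnb : ∀ i, 1 ≤ i → i ≤ f → ∀ x ∈ B i, ∀ j, j ≤ f → x ≠ b j := by
    intro i h1 h2 x hx j hj he; exact hbB i h1 h2 j hj (he ▸ hx)
  -- adjacency constructors
  have adj0f : H.Adj (b 0) (b f) := (hH _ _).2 (Or.inl rfl)
  have adj01 : H.Adj (b 0) (b 1) := (hH _ _).2 (Or.inr (Or.inl rfl))
  have adjf : H.Adj (b (f-1)) (b f) := (hH _ _).2 (Or.inr (Or.inr (Or.inl rfl)))
  have adjsp : ∀ j, 1 ≤ j → j ≤ f - 2 → H.Adj (b j) (b (j+1)) := fun j h1 h2 =>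
    (hH _ _).2 (Or.inr (Or.inr (Or.inr (Or.inl ⟨j, h1, h2, rfl⟩))))
  have adjBB : ∀ i, 1 ≤ i → i ≤ f → ∀ x ∈ B i, ∀ y ∈ B i, x ≠ y → H.Adj x y :=
    fun i h1 h2 x hx y hy hxy =>
    (hH _ _).2 (Or.inr (Or.inr (Or.inr (Or.inr (Or.inl ⟨i, h1, h2, hx, hy, hxy⟩)))))
  have adjBl : ∀ i, 1 ≤ i → i ≤ f → ∀ x ∈ B i, H.Adj x (b (i-1)) := fun i h1 h2 x hx =>
    (hH _ _).2 (Or.inr (Or.inr (Or.inr (Or.inr (Or.inr ⟨i, h1, h2, Or.inl ⟨hx, Or.inl rfl⟩⟩)))))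
  have adjBr : ∀ i, 1 ≤ i → i ≤ f → ∀ x ∈ B i, H.Adj x (b i) := fun i h1 h2 x hx =>
    (hH _ _).2 (Or.inr (Or.inr (Or.inr (Or.inr (Or.inr ⟨i, h1, h2, Or.inl ⟨hx, Or.inr rfl⟩⟩)))))
  -- weight bounds
  have wt_ge : ∀ x y, H.Adj x y → ε ≤ wt x y := by
    intro x y hxy
    rcases (hH x y).1 hxy with h | h | h | ⟨j, hj1, hj2, h⟩ | ⟨i, hi1, hi2, hx, hy, hne⟩ |
      ⟨i, hi1, hi2, h6⟩
    · rw [Sym2.eq_iff] at h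
      rcases h with ⟨rfl, rfl⟩ | ⟨rfl, rfl⟩
      · rw [hw1]; linarith
      · rw [hwtsymm, hw1]; linarith
    · rw [Sym2.eq_iff] at h
      rcases h with ⟨rfl, rfl⟩ | ⟨rfl, rfl⟩
      · rw [hw2]; linarith
      · rw [hwtsymm, hw2]; linarith
    · rw [Sym2.eq_iff] at h
      rcases h with ⟨rfl, rfl⟩ | ⟨rfl, rfl⟩
      · rw [hw3]; linarith
      · rw [hwtsymm, hw3]; linarith
    · rw [Sym2.eq_iff] at h
      rcases h with ⟨rfl, rfl⟩ | ⟨rfl, rfl⟩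
      · rw [hw4 j hj1 hj2]
      · rw [hwtsymm, hw4 j hj1 hj2]
    · rw [hw5 i hi1 hi2 x hx y hy hne]
    · rcases h6 with ⟨hx, rfl | rfl⟩ | ⟨hy, rfl | rfl⟩
      · rw [(hw6 i hi1 hi2 x hx).1]; linarith
      · rw [(hw6 i hi1 hi2 x hx).2]; linarith
      · rw [hwtsymm, (hw6 i hi1 hi2 y hy).1]; linarith
      · rw [hwtsymm, (hw6 i hi1 hi2 y hy).2]; linarith
  have wt_nn : ∀ x y, H.Adj x y → 0 ≤ wt x y := fun x y h => le_trans hε0.le (wt_ge x y h)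
  -- connectivity of H
  have bwalk : ∀ j, j ≤ f → Nonempty (H.Walk (b 0) (b j)) := by
    intro j
    induction j with
    | zero => exact fun _ => ⟨SimpleGraph.Walk.nil⟩
    | succ n ih =>
      intro hn
      have hadj : H.Adj (b n) (b (n+1)) := by
        by_cases h0 : n = 0
        · subst h0; exact adj01
        · by_cases hfe : n + 1 = f
          · have e1 : n = f - 1 := by omega
            rw [hfe, e1]
            exact adjf
          · exact adjsp n (by omega) (by omega)
      exact ⟨(ih (by omega)).some.concat hadj⟩
  have conn : ∀ p q : V, Nonempty (H.Walk p q) := by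
    have h0 : ∀ v : V, Nonempty (H.Walk (b 0) v) := by
      intro v
      rcases hcover v with ⟨j, hj, rfl⟩ | ⟨i, hi1, hi2, hv⟩
      · exact bwalk j hj
      · exact ⟨(bwalk (i-1) (by omega)).some.concat (adjBl i hi1 hi2 v hv).symm⟩
    intro p q
    exact ⟨(h0 p).some.reverse.append (h0 q).some⟩
  -- basic distance facts
  have dnn : ∀ p q : V, 0 ≤ gdistW H wt p q := fun p q => gdistW_nonneg wt_nn p q
  have dub : ∀ x y, H.Adj x y → gdistW H wt x y ≤ wt x y := by
    intro x y h
    have := gdistW_le_wlenW wt_nn (SimpleGraph.Walk.cons h SimpleGraph.Walk.nil)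
    rwa [wlenW_cons, wlenW_nil, add_zero] at this
  have dsep : ∀ p q : V, p ≠ q → ε ≤ gdistW H wt p q := fun p q hpq =>
    gdistW_sep hε0.le wt_ge hpq (conn p q).some
  -- master potential bound
  have dpot : ∀ β γ : ℕ → ℝ,
      (∀ i, 1 ≤ i → i ≤ f → |β i - γ (i-1)| ≤ 1 ∧ |β i - γ i| ≤ 1) →
      (∀ j, 1 ≤ j → j ≤ f-2 → |γ j - γ (j+1)| ≤ ε) →
      |γ 0 - γ 1| ≤ 1 → |γ (f-1) - γ f| ≤ 1 → |γ 0 - γ f| ≤ 1 + ε →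
      ∀ p q : V, |phi f b B β γ p - phi f b B β γ q| ≤ gdistW H wt p q := by
    intro β γ hc1 hc2 hc3 hc4 hc5 p q
    have lip : ∀ x y, H.Adj x y → |phi f b B β γ x - phi f b B β γ y| ≤ wt x y := by
      intro x y hxy
      rcases (hH x y).1 hxy with h | h | h | ⟨j, hj1, hj2, h⟩ | ⟨i, hi1, hi2, hx, hy, hne⟩ |
        ⟨i, hi1, hi2, h6⟩
      · rw [Sym2.eq_iff] at h
        rcases h with ⟨rfl, rfl⟩ | ⟨rfl, rfl⟩
        · rw [phi_b hbB hbinj β γ (Nat.zero_le f), phi_b hbB hbinj β γ le_rfl, hw1]; exact hc5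
        · rw [phi_b hbB hbinj β γ le_rfl, phi_b hbB hbinj β γ (Nat.zero_le f), hwtsymm, hw1,
            abs_sub_comm]
          exact hc5
      · rw [Sym2.eq_iff] at h
        rcases h with ⟨rfl, rfl⟩ | ⟨rfl, rfl⟩
        · rw [phi_b hbB hbinj β γ (Nat.zero_le f), phi_b hbB hbinj β γ (by omega), hw2]; exact hc3
        · rw [phi_b hbB hbinj β γ (by omega), phi_b hbB hbinj β γ (Nat.zero_le f), hwtsymm, hw2,
            abs_sub_comm]
          exact hc3
      · rw [Sym2.eq_iff] at h
        rcases h with ⟨rfl, rfl⟩ | ⟨rfl, rfl⟩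
        · rw [phi_b hbB hbinj β γ (Nat.sub_le f 1), phi_b hbB hbinj β γ le_rfl, hw3]; exact hc4
        · rw [phi_b hbB hbinj β γ le_rfl, phi_b hbB hbinj β γ (Nat.sub_le f 1), hwtsymm, hw3,
            abs_sub_comm]
          exact hc4
      · rw [Sym2.eq_iff] at h
        rcases h with ⟨rfl, rfl⟩ | ⟨rfl, rfl⟩
        · rw [phi_b hbB hbinj β γ (by omega), phi_b hbB hbinj β γ (by omega), hw4 j hj1 hj2]
          exact hc2 j hj1 hj2
        · rw [phi_b hbB hbinj β γ (by omega), phi_b hbB hbinj β γ (by omega), hwtsymm,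
            hw4 j hj1 hj2, abs_sub_comm]
          exact hc2 j hj1 hj2
      · rw [phi_mem hBdisj β γ hi1 hi2 hx, phi_mem hBdisj β γ hi1 hi2 hy,
          hw5 i hi1 hi2 x hx y hy hne, sub_self, abs_zero]
        exact hε0.le
      · rcases h6 with ⟨hx, rfl | rfl⟩ | ⟨hy, rfl | rfl⟩
        · rw [phi_mem hBdisj β γ hi1 hi2 hx, phi_b hbB hbinj β γ (by omega),
            (hw6 i hi1 hi2 x hx).1]
          exact (hc1 i hi1 hi2).1
        · rw [phi_mem hBdisj β γ hi1 hi2 hx, phi_b hbB hbinj β γ hi2, (hw6 i hi1 hi2 x hx).2]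
          exact (hc1 i hi1 hi2).2
        · rw [phi_b hbB hbinj β γ (by omega), phi_mem hBdisj β γ hi1 hi2 hy, hwtsymm,
            (hw6 i hi1 hi2 y hy).1, abs_sub_comm]
          exact (hc1 i hi1 hi2).1
        · rw [phi_b hbB hbinj β γ hi2, phi_mem hBdisj β γ hi1 hi2 hy, hwtsymm,
            (hw6 i hi1 hi2 y hy).2, abs_sub_comm]
          exact (hc1 i hi1 hi2).2
    exact abs_potential_le_gdistW lip (conn p q).some
  -- specific potential-based lower bounds
  have habs0ε : ∀ u v : ℝ, (u = 0 ∨ u = ε) → (v = 0 ∨ v = ε) → |u - v| ≤ ε := by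
    rintro u v (rfl|rfl) (rfl|rfl) <;> rw [abs_sub_le_iff] <;> constructor <;> linarith
  have dxb : ∀ m, 1 ≤ m → m ≤ f → ∀ x ∈ B m, ∀ j, j ≤ f →
      (1 ≤ gdistW H wt x (b j) ∧ 1 ≤ gdistW H wt (b j) x) ∧
      (¬(j = m - 1 ∨ j = m) → (1 + ε ≤ gdistW H wt x (b j) ∧ 1 + ε ≤ gdistW H wt (b j) x)) := by
    intro m hm1 hm2 x hx j hj
    set β : ℕ → ℝ := fun i => if i = m then 1 + ε else 0 with hβ
    set γ : ℕ → ℝ := fun k => if k = m - 1 ∨ k = m then ε else 0 with hγ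
    have hγv : ∀ k, γ k = 0 ∨ γ k = ε := by
      intro k; by_cases h : k = m - 1 ∨ k = m <;> simp [hγ, h]
    have hc1 : ∀ i, 1 ≤ i → i ≤ f → |β i - γ (i-1)| ≤ 1 ∧ |β i - γ i| ≤ 1 := by
      intro i h1 h2
      by_cases h : i = m
      · subst h
        have e1 : γ (i-1) = ε := by simp [hγ]
        have e2 : γ i = ε := by simp [hγ]
        have e3 : β i = 1 + ε := by simp [hβ]
        rw [e1, e2, e3]
        constructor <;> · rw [abs_sub_le_iff]; constructor <;> linarith
      · have e3 : β i = 0 := by simp [hβ, h]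
        rw [e3]
        constructor <;> exact le_trans (habs0ε _ _ (Or.inl rfl) (hγv _)) hεle1
    have hc2 : ∀ j', 1 ≤ j' → j' ≤ f-2 → |γ j' - γ (j'+1)| ≤ ε :=
      fun j' _ _ => habs0ε _ _ (hγv _) (hγv _)
    have hc3 : |γ 0 - γ 1| ≤ 1 := le_trans (habs0ε _ _ (hγv _) (hγv _)) hεle1
    have hc4 : |γ (f-1) - γ f| ≤ 1 := le_trans (habs0ε _ _ (hγv _) (hγv _)) hεle1
    have hc5 : |γ 0 - γ f| ≤ 1 + ε := le_trans (habs0ε _ _ (hγv _) (hγv _)) (by linarith)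
    have h1 := dpot β γ hc1 hc2 hc3 hc4 hc5 x (b j)
    have h2 := dpot β γ hc1 hc2 hc3 hc4 hc5 (b j) x
    rw [phi_mem hBdisj β γ hm1 hm2 hx, phi_b hbB hbinj β γ hj] at h1
    rw [phi_mem hBdisj β γ hm1 hm2 hx, phi_b hbB hbinj β γ hj, abs_sub_comm] at h2
    have hβm : β m = 1 + ε := by simp [hβ]
    have key1 : 1 ≤ |β m - γ j| := by
      rw [hβm]; rcases hγv j with h|h <;> rw [h]
      · rw [sub_zero, abs_of_nonneg (by linarith)]; linarith
      · rw [show (1:ℝ) + ε - ε = 1 by ring, abs_one]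
    have key2 : ¬(j = m - 1 ∨ j = m) → 1 + ε ≤ |β m - γ j| := by
      intro hn
      have e : γ j = 0 := by simp [hγ, hn]
      rw [hβm, e, sub_zero, abs_of_nonneg (by linarith)]
    exact ⟨⟨le_trans key1 h1, le_trans key1 h2⟩,
      fun hn => ⟨le_trans (key2 hn) h1, le_trans (key2 hn) h2⟩⟩
  have dBB : ∀ i m, 1 ≤ i → i ≤ f → 1 ≤ m → m ≤ f → i ≠ m →
      ∀ x ∈ B i, ∀ z ∈ B m, 2 ≤ gdistW H wt x z := by
    intro i m hi1 hi2 hm1 hm2 hne x hx z hz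
    set β : ℕ → ℝ := fun i' => if i' = i then 1 else if i' = m then -1 else 0 with hβ
    set γ : ℕ → ℝ := fun _ => (0:ℝ) with hγ
    have hβv : ∀ k, β k = 1 ∨ β k = -1 ∨ β k = 0 := by
      intro k
      simp only [hβ]
      by_cases h1 : k = i
      · rw [if_pos h1]; tauto
      · rw [if_neg h1]
        by_cases h2 : k = m
        · rw [if_pos h2]; tauto
        · rw [if_neg h2]; tauto
    have hc1 : ∀ i', 1 ≤ i' → i' ≤ f → |β i' - γ (i'-1)| ≤ 1 ∧ |β i' - γ i'| ≤ 1 := by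
      intro i' _ _
      constructor <;>
        · show |β i' - 0| ≤ 1
          rw [sub_zero]
          rcases hβv i' with h|h|h <;> rw [h] <;> norm_num
    have hc2 : ∀ j', 1 ≤ j' → j' ≤ f-2 → |γ j' - γ (j'+1)| ≤ ε := by
      intro j' _ _; show |(0:ℝ) - 0| ≤ ε; simpa using hε0.le
    have hc3 : |γ 0 - γ 1| ≤ 1 := by show |(0:ℝ) - 0| ≤ 1; norm_num
    have hc4 : |γ (f-1) - γ f| ≤ 1 := by show |(0:ℝ) - 0| ≤ 1; norm_num
    have hc5 : |γ 0 - γ f| ≤ 1 + ε := by show |(0:ℝ) - 0| ≤ 1 + ε; simp; linarith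
    have h1 := dpot β γ hc1 hc2 hc3 hc4 hc5 x z
    rw [phi_mem hBdisj β γ hi1 hi2 hx, phi_mem hBdisj β γ hm1 hm2 hz] at h1
    have e1 : β i = 1 := by simp [hβ]
    have e2 : β m = -1 := by
      have hmi : m ≠ i := Ne.symm hne
      simp only [hβ]
      rw [if_neg hmi]; norm_num
    rw [e1, e2, show (1:ℝ) - -1 = 2 by ring, abs_of_pos (by norm_num : (0:ℝ) < 2)] at h1
    exact h1
  have d0f : 1 + ε ≤ gdistW H wt (b 0) (b f) ∧ 1 + ε ≤ gdistW H wt (b f) (b 0) := by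
    set γ : ℕ → ℝ := fun j => if j = 0 then 0 else if j = f then 1 + ε else 1 with hγ
    set β : ℕ → ℝ := fun _ => (1:ℝ) with hβ
    have hγv : ∀ k, γ k = 0 ∨ γ k = 1 ∨ γ k = 1 + ε := by
      intro k
      simp only [hγ]
      by_cases h1 : k = 0
      · rw [if_pos h1]; tauto
      · rw [if_neg h1]
        by_cases h2 : k = f
        · rw [if_pos h2]; tauto
        · rw [if_neg h2]; tauto
    have hc1 : ∀ i, 1 ≤ i → i ≤ f → |β i - γ (i-1)| ≤ 1 ∧ |β i - γ i| ≤ 1 := by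
      intro i _ _
      constructor <;>
        · show |(1:ℝ) - _| ≤ 1
          rcases hγv _ with h|h|h <;> rw [h] <;> rw [abs_sub_le_iff] <;> constructor <;> linarith
    have hc2 : ∀ j, 1 ≤ j → j ≤ f-2 → |γ j - γ (j+1)| ≤ ε := by
      intro j h1 h2
      have e1 : γ j = 1 := by simp only [hγ]; rw [if_neg (by omega), if_neg (by omega)]
      have e2 : γ (j+1) = 1 := by simp only [hγ]; rw [if_neg (by omega), if_neg (by omega)]
      rw [e1, e2, sub_self, abs_zero]; exact hε0.le
    have hc3 : |γ 0 - γ 1| ≤ 1 := by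
      have e1 : γ 0 = 0 := by simp [hγ]
      have e2 : γ 1 = 1 := by simp only [hγ]; rw [if_neg (by omega), if_neg (by omega)]
      rw [e1, e2]; norm_num
    have hc4 : |γ (f-1) - γ f| ≤ 1 := by
      have e1 : γ (f-1) = 1 := by simp only [hγ]; rw [if_neg (by omega), if_neg (by omega)]
      have e2 : γ f = 1 + ε := by simp only [hγ]; rw [if_neg (by omega)]; norm_num
      rw [e1, e2, abs_sub_le_iff]; constructor <;> linarith
    have hc5 : |γ 0 - γ f| ≤ 1 + ε := by
      have e1 : γ 0 = 0 := by simp [hγ]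
      have e2 : γ f = 1 + ε := by simp only [hγ]; rw [if_neg (by omega)]; norm_num
      rw [e1, e2, abs_sub_le_iff]; constructor <;> linarith
    have key : 1 + ε ≤ |γ 0 - γ f| := by
      have e1 : γ 0 = 0 := by simp [hγ]
      have e2 : γ f = 1 + ε := by simp only [hγ]; rw [if_neg (by omega)]; norm_num
      rw [e1, e2, zero_sub, abs_neg, abs_of_nonneg (by linarith)]
    have h1 := dpot β γ hc1 hc2 hc3 hc4 hc5 (b 0) (b f)
    have h2 := dpot β γ hc1 hc2 hc3 hc4 hc5 (b f) (b 0)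
    rw [phi_b hbB hbinj β γ (Nat.zero_le f), phi_b hbB hbinj β γ le_rfl] at h1
    rw [phi_b hbB hbinj β γ le_rfl, phi_b hbB hbinj β γ (Nat.zero_le f), abs_sub_comm] at h2
    exact ⟨le_trans key h1, le_trans key h2⟩
  have indpot : ∀ t, t ≤ f → (t = 0 ∨ t = f) →
      ∀ j, j ≤ f → j ≠ t → 1 ≤ gdistW H wt (b t) (b j) ∧ 1 ≤ gdistW H wt (b j) (b t) := by
    intro t ht ht' j hj hjt
    set γ : ℕ → ℝ := fun k => if k = t then 1 else 0 with hγ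
    set β : ℕ → ℝ := fun _ => (0:ℝ) with hβ
    have hγv : ∀ k, γ k = 0 ∨ γ k = 1 := by
      intro k; by_cases h : k = t <;> simp [hγ, h]
    have hc1 : ∀ i, 1 ≤ i → i ≤ f → |β i - γ (i-1)| ≤ 1 ∧ |β i - γ i| ≤ 1 := by
      intro i _ _
      constructor <;>
        · show |(0:ℝ) - _| ≤ 1
          rcases hγv _ with h|h <;> rw [h] <;> norm_num
    have hc2 : ∀ j', 1 ≤ j' → j' ≤ f-2 → |γ j' - γ (j'+1)| ≤ ε := by
      intro j' h1 h2
      have e1 : γ j' = 0 := by simp only [hγ]; rw [if_neg (by omega)]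
      have e2 : γ (j'+1) = 0 := by simp only [hγ]; rw [if_neg (by omega)]
      rw [e1, e2, sub_self, abs_zero]; exact hε0.le
    have hc3 : |γ 0 - γ 1| ≤ 1 := by
      rcases hγv 0 with h|h <;> rcases hγv 1 with h'|h' <;> rw [h, h', abs_sub_le_iff] <;>
        constructor <;> linarith
    have hc4 : |γ (f-1) - γ f| ≤ 1 := by
      rcases hγv (f-1) with h|h <;> rcases hγv f with h'|h' <;> rw [h, h', abs_sub_le_iff] <;>
        constructor <;> linarith
    have hc5 : |γ 0 - γ f| ≤ 1 + ε := by
      rcases hγv 0 with h|h <;> rcases hγv f with h'|h' <;> rw [h, h', abs_sub_le_iff] <;>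
        constructor <;> linarith
    have key : 1 ≤ |γ t - γ j| := by
      have e1 : γ t = 1 := by simp [hγ]
      have e2 : γ j = 0 := by simp only [hγ]; rw [if_neg hjt]
      rw [e1, e2, sub_zero, abs_one]
    have h1 := dpot β γ hc1 hc2 hc3 hc4 hc5 (b t) (b j)
    have h2 := dpot β γ hc1 hc2 hc3 hc4 hc5 (b j) (b t)
    rw [phi_b hbB hbinj β γ ht, phi_b hbB hbinj β γ hj] at h1
    rw [phi_b hbB hbinj β γ hj, phi_b hbB hbinj β γ ht, abs_sub_comm] at h2
    exact ⟨le_trans key h1, le_trans key h2⟩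
  -- classification of edges of H'
  have classifyE : ∀ a c : V, (H.deleteEdges {s(b 0, b f)}).Adj a c →
      (∃ j, j + 1 ≤ f ∧ ((a = b j ∧ c = b (j+1)) ∨ (a = b (j+1) ∧ c = b j))) ∨
      (∃ i, 1 ≤ i ∧ i ≤ f ∧ a ∈ B i ∧ c ∈ B i ∧ a ≠ c) ∨
      (∃ i, 1 ≤ i ∧ i ≤ f ∧
        ((a ∈ B i ∧ (c = b (i-1) ∨ c = b i)) ∨ (c ∈ B i ∧ (a = b (i-1) ∨ a = b i)))) := by
    intro a c hac
    rw [SimpleGraph.deleteEdges_adj] at hac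
    obtain ⟨hadj, hns⟩ := hac
    rcases (hH a c).1 hadj with h | h | h | ⟨j, hj1, hj2, h⟩ | h5 | h6
    · exact absurd (by rw [h]; exact Set.mem_singleton _) hns
    · rw [Sym2.eq_iff] at h
      left
      rcases h with ⟨h1, h2⟩ | ⟨h1, h2⟩
      · exact ⟨0, by omega, Or.inl ⟨h1, h2⟩⟩
      · exact ⟨0, by omega, Or.inr ⟨h1, h2⟩⟩
    · rw [Sym2.eq_iff] at h
      left
      refine ⟨f-1, by omega, ?_⟩
      have e : f - 1 + 1 = f := by omega
      rw [e]
      rcases h with ⟨h1, h2⟩ | ⟨h1, h2⟩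
      · exact Or.inl ⟨h1, h2⟩
      · exact Or.inr ⟨h1, h2⟩
    · rw [Sym2.eq_iff] at h
      left
      refine ⟨j, by omega, ?_⟩
      rcases h with ⟨h1, h2⟩ | ⟨h1, h2⟩
      · exact Or.inl ⟨h1, h2⟩
      · exact Or.inr ⟨h1, h2⟩
    · exact Or.inr (Or.inl h5)
    · exact Or.inr (Or.inr h6)
  -- structure of the augmented edge pairs
  have helperC : ∀ a c : V, (H.deleteEdges {s(b 0, b f)}).Adj a c → ∀ z ∈ C a c,
      ((∃ j, j ≤ f ∧ a = b j) ∧ (∃ k, k ≤ f ∧ z = b k)) ∨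
      (∃ i, 1 ≤ i ∧ i ≤ f ∧ a ∈ B i ∧ z ∈ B i) ∨
      (∃ i, 1 ≤ i ∧ i ≤ f ∧
        ((a ∈ B i ∧ (z = b (i-1) ∨ z = b i)) ∨ (z ∈ B i ∧ (a = b (i-1) ∨ a = b i)))) := by
    intro a c hac z hz
    have hCc := hCcard a c hac
    have hzna : z ≠ a := by
      intro h; exact (hCsub a c hac hz) (by rw [h]; exact Or.inl rfl)
    have hznc : z ≠ c := by
      intro h; exact (hCsub a c hac hz) (by rw [h]; exact Or.inr rfl)
    rcases classifyE a c hac with ⟨j, hjf, hor⟩ | ⟨i, hi1, hi2, haB, hcB, hacne⟩ |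
      ⟨i, hi1, hi2, h3⟩
    · -- spine edge {b j, b (j+1)}
      rcases hcover z with ⟨k, hk, rfl⟩ | ⟨m, hm1, hm2, hzB⟩
      · left
        refine ⟨?_, k, hk, rfl⟩
        rcases hor with ⟨ha, _⟩ | ⟨ha, _⟩
        exacts [⟨j, by omega, ha⟩, ⟨j+1, hjf, ha⟩]
      · by_cases hmj : m = j + 1
        · subst hmj
          right; right
          refine ⟨j+1, by omega, hjf, Or.inr ⟨hzB, ?_⟩⟩
          have e : j + 1 - 1 = j := by omega
          rw [e]
          rcases hor with ⟨ha, _⟩ | ⟨ha, _⟩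
          exacts [Or.inl ha, Or.inr ha]
        · exfalso
          have hzB' : z ∉ B (j+1) := by
            intro hmem
            have hd := hBdisj m (j+1) hm1 hm2 (by omega) hjf hmj
            exact absurd (hd ▸ Set.mem_inter hzB hmem) (Set.notMem_empty z)
          obtain ⟨y, hyB, hyC⟩ := exists_mem_not_mem
            (show (C a c).ncard ≤ (B (j+1)).ncard by
              rw [hCc, hBcard (j+1) (by omega) hjf]; omega)
            (Set.toFinite _) (Set.toFinite _) hz hzB'
          have hy_b : ∀ k, k ≤ f → y ≠ b k := hxnb (j+1) (by omega) hjf y hyB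
          have hyna : y ≠ a := by
            rcases hor with ⟨ha, _⟩ | ⟨ha, _⟩ <;> rw [ha]
            exacts [hy_b j (by omega), hy_b (j+1) hjf]
          have hync : y ≠ c := by
            rcases hor with ⟨_, hc⟩ | ⟨_, hc⟩ <;> rw [hc]
            exacts [hy_b (j+1) hjf, hy_b j (by omega)]
          have hmin := hCmin a c hac z hz y hyna hync hyC
          have hyadjj : H.Adj y (b j) := by
            have h' := adjBl (j+1) (by omega) hjf y hyB
            rwa [show j + 1 - 1 = j from by omega] at h'
          have hyadjj1 : H.Adj y (b (j+1)) := adjBr (j+1) (by omega) hjf y hyB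
          have hwyj : wt y (b j) = 1 := by
            have h' := (hw6 (j+1) (by omega) hjf y hyB).1
            rwa [show j + 1 - 1 = j from by omega] at h'
          have hwyj1 : wt y (b (j+1)) = 1 := (hw6 (j+1) (by omega) hjf y hyB).2
          have u1 : gdistW H wt (b j) y ≤ 1 := by
            refine le_trans (dub _ _ hyadjj.symm) ?_
            rw [hwtsymm (b j) y, hwyj]
          have u1' : gdistW H wt (b (j+1)) y ≤ 1 := by
            refine le_trans (dub _ _ hyadjj1.symm) ?_
            rw [hwtsymm (b (j+1)) y, hwyj1]
          have u2 : gdistW H wt y (b (j+1)) ≤ 1 := le_trans (dub _ _ hyadjj1) hwyj1.le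
          have u2' : gdistW H wt y (b j) ≤ 1 := le_trans (dub _ _ hyadjj) hwyj.le
          have hlb : 2 + ε ≤ gdistW H wt a z + gdistW H wt z c := by
            rcases hor with ⟨ha, hc⟩ | ⟨ha, hc⟩ <;> rw [ha, hc]
            · by_cases hj' : j = m - 1 ∨ j = m
              · have h1 := (dxb m hm1 hm2 z hzB j (by omega)).1.2
                have h2 := ((dxb m hm1 hm2 z hzB (j+1) hjf).2 (by omega)).1
                linarith
              · have h1 := ((dxb m hm1 hm2 z hzB j (by omega)).2 hj').2
                have h2 := (dxb m hm1 hm2 z hzB (j+1) hjf).1.1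
                linarith
            · by_cases hj' : j + 1 = m - 1 ∨ j + 1 = m
              · have h1 := (dxb m hm1 hm2 z hzB (j+1) hjf).1.2
                have h2 := ((dxb m hm1 hm2 z hzB j (by omega)).2 (by omega)).1
                linarith
              · have h1 := ((dxb m hm1 hm2 z hzB (j+1) hjf).2 hj').2
                have h2 := (dxb m hm1 hm2 z hzB j (by omega)).1.1
                linarith
          have hub : gdistW H wt a y + gdistW H wt y c ≤ 2 := by
            rcases hor with ⟨ha, hc⟩ | ⟨ha, hc⟩ <;> rw [ha, hc] <;> linarith
          linarith
    · -- both endpoints in B i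
      have T2contra : z ∉ B i → z ≠ b (i-1) →
          2 + 2*ε ≤ gdistW H wt a z + gdistW H wt z c → False := by
        intro hzBi hzbl hlow
        by_cases hsub : B i \ {a, c} ⊆ C a c
        · have hzdiff : z ∉ B i \ {a, c} := fun h => hzBi h.1
          have hins : insert z (B i \ {a, c}) ⊆ C a c := Set.insert_subset hz hsub
          have hdcard : (B i \ {a, c}).ncard = 2*f - 2 := by
            rw [Set.ncard_diff (by rintro t (rfl | rfl); exacts [haB, hcB]) (Set.toFinite _),
              hBcard i hi1 hi2, Set.ncard_pair hacne]
          have heq : insert z (B i \ {a, c}) = C a c := by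
            refine Set.eq_of_subset_of_ncard_le hins ?_ (Set.toFinite _)
            rw [hCc, Set.ncard_insert_of_notMem hzdiff (Set.toFinite _), hdcard]
            omega
          have hblC : b (i-1) ∉ C a c := by
            rw [← heq]
            intro h
            rcases Set.mem_insert_iff.mp h with h' | h'
            · exact hzbl h'.symm
            · exact hbB i hi1 hi2 (i-1) (by omega) h'.1
          have hbla : b (i-1) ≠ a := Ne.symm (hxnb i hi1 hi2 a haB (i-1) (by omega))
          have hblc : b (i-1) ≠ c := Ne.symm (hxnb i hi1 hi2 c hcB (i-1) (by omega))
          have hmin := hCmin a c hac z hz (b (i-1)) hbla hblc hblC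
          have u1 : gdistW H wt a (b (i-1)) ≤ 1 :=
            le_trans (dub _ _ (adjBl i hi1 hi2 a haB)) (hw6 i hi1 hi2 a haB).1.le
          have u2 : gdistW H wt (b (i-1)) c ≤ 1 := by
            refine le_trans (dub _ _ (adjBl i hi1 hi2 c hcB).symm) ?_
            rw [hwtsymm]
            exact (hw6 i hi1 hi2 c hcB).1.le
          linarith
        · obtain ⟨y, hyD, hyC⟩ := Set.not_subset.mp hsub
          have hyB : y ∈ B i := hyD.1
          have hyna : y ≠ a := fun h => hyD.2 (Or.inl h)
          have hync : y ≠ c := fun h => hyD.2 (Or.inr h)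
          have hmin := hCmin a c hac z hz y hyna hync hyC
          have u1 : gdistW H wt a y ≤ ε :=
            le_trans (dub _ _ (adjBB i hi1 hi2 a haB y hyB (Ne.symm hyna)))
              (hw5 i hi1 hi2 a haB y hyB (Ne.symm hyna)).le
          have u2 : gdistW H wt y c ≤ ε :=
            le_trans (dub _ _ (adjBB i hi1 hi2 y hyB c hcB hync))
              (hw5 i hi1 hi2 y hyB c hcB hync).le
          linarith
      rcases hcover z with ⟨k, hk, rfl⟩ | ⟨m, hm1, hm2, hzB⟩
      · by_cases hk' : k = i - 1 ∨ k = i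
        · right; right
          refine ⟨i, hi1, hi2, Or.inl ⟨haB, ?_⟩⟩
          rcases hk' with h | h <;> rw [h]
          exacts [Or.inl rfl, Or.inr rfl]
        · exfalso
          refine T2contra (hbB i hi1 hi2 k hk) (hbne k (i-1) hk (by omega) (by omega)) ?_
          have h1 := ((dxb i hi1 hi2 a haB k hk).2 hk').1
          have h2 := ((dxb i hi1 hi2 c hcB k hk).2 hk').2
          linarith
      · by_cases hmi : m = i
        · subst hmi
          exact Or.inr (Or.inl ⟨m, hm1, hm2, haB, hzB⟩)
        · exfalso
          have hzBi : z ∉ B i := by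
            intro hmem
            have hd := hBdisj m i hm1 hm2 hi1 hi2 hmi
            exact absurd (hd ▸ Set.mem_inter hzB hmem) (Set.notMem_empty z)
          refine T2contra hzBi (Ne.symm (hxnb m hm1 hm2 z hzB (i-1) (by omega))).symm ?_
          have h1 := dBB i m hi1 hi2 hm1 hm2 (fun h => hmi h.symm) a haB z hzB
          have h2 := dBB m i hm1 hm2 hi1 hi2 hmi z hzB c hcB
          linarith
    · -- mixed edge between B i and b (i-1) / b i
      rcases h3 with ⟨haB, hcb⟩ | ⟨hcB, hab⟩
      · -- a ∈ B i, c = b (i-1) or b i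
        have hcnB : ∀ y ∈ B i, y ≠ c := by
          intro y hy
          rcases hcb with rfl | rfl
          exacts [hxnb i hi1 hi2 y hy (i-1) (by omega), hxnb i hi1 hi2 y hy i hi2]
        have T3contra : z ∉ B i →
            1 + 2*ε ≤ gdistW H wt a z + gdistW H wt z c → False := by
          intro hzBi hlow
          have hzS : z ∉ B i \ {a} := fun h => hzBi h.1
          obtain ⟨y, hyD, hyC⟩ := exists_mem_not_mem
            (show (C a c).ncard ≤ (B i \ {a}).ncard by
              rw [hCc, Set.ncard_diff_singleton_of_mem haB,
                hBcard i hi1 hi2])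
            (Set.toFinite _) (Set.toFinite _) hz hzS
          have hyB : y ∈ B i := hyD.1
          have hyna : y ≠ a := hyD.2
          have hync : y ≠ c := hcnB y hyB
          have hmin := hCmin a c hac z hz y hyna hync hyC
          have u1 : gdistW H wt a y ≤ ε :=
            le_trans (dub _ _ (adjBB i hi1 hi2 a haB y hyB (Ne.symm hyna)))
              (hw5 i hi1 hi2 a haB y hyB (Ne.symm hyna)).le
          have u2 : gdistW H wt y c ≤ 1 := by
            rcases hcb with rfl | rfl
            · exact le_trans (dub _ _ (adjBl i hi1 hi2 y hyB)) (hw6 i hi1 hi2 y hyB).1.le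
            · exact le_trans (dub _ _ (adjBr i hi1 hi2 y hyB)) (hw6 i hi1 hi2 y hyB).2.le
          linarith
        rcases hcover z with ⟨k, hk, rfl⟩ | ⟨m, hm1, hm2, hzB⟩
        · by_cases hk' : k = i - 1 ∨ k = i
          · right; right
            refine ⟨i, hi1, hi2, Or.inl ⟨haB, ?_⟩⟩
            rcases hk' with h | h <;> rw [h]
            exacts [Or.inl rfl, Or.inr rfl]
          · exfalso
            refine T3contra (hbB i hi1 hi2 k hk) ?_
            have h1 := ((dxb i hi1 hi2 a haB k hk).2 hk').1
            have h2 : ε ≤ gdistW H wt (b k) c := by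
              apply dsep
              rcases hcb with rfl | rfl
              exacts [hbne k (i-1) hk (by omega) (by omega), hbne k i hk hi2 (by omega)]
            linarith
        · by_cases hmi : m = i
          · subst hmi
            exact Or.inr (Or.inl ⟨m, hm1, hm2, haB, hzB⟩)
          · exfalso
            have hzBi : z ∉ B i := by
              intro hmem
              have hd := hBdisj m i hm1 hm2 hi1 hi2 hmi
              exact absurd (hd ▸ Set.mem_inter hzB hmem) (Set.notMem_empty z)
            refine T3contra hzBi ?_
            have h1 := dBB i m hi1 hi2 hm1 hm2 (fun h => hmi h.symm) a haB z hzB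
            have h2 : 1 ≤ gdistW H wt z c := by
              rcases hcb with rfl | rfl
              exacts [(dxb m hm1 hm2 z hzB (i-1) (by omega)).1.1,
                (dxb m hm1 hm2 z hzB i hi2).1.1]
            linarith
      · -- c ∈ B i, a = b (i-1) or b i
        rcases hcover z with ⟨k, hk, rfl⟩ | ⟨m, hm1, hm2, hzB⟩
        · left
          refine ⟨?_, k, hk, rfl⟩
          rcases hab with rfl | rfl
          exacts [⟨i-1, by omega, rfl⟩, ⟨i, hi2, rfl⟩]
        · by_cases hmi : m = i
          · subst hmi
            exact Or.inr (Or.inr ⟨m, hm1, hm2, Or.inr ⟨hzB, hab⟩⟩)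
          · exfalso
            have hzS : z ∉ B i \ {c} := by
              intro h
              have hd := hBdisj m i hm1 hm2 hi1 hi2 hmi
              exact absurd (hd ▸ Set.mem_inter hzB h.1) (Set.notMem_empty z)
            obtain ⟨y, hyD, hyC⟩ := exists_mem_not_mem
              (show (C a c).ncard ≤ (B i \ {c}).ncard by
                rw [hCc, Set.ncard_diff_singleton_of_mem hcB,
                  hBcard i hi1 hi2])
              (Set.toFinite _) (Set.toFinite _) hz hzS
            have hyB : y ∈ B i := hyD.1
            have hync : y ≠ c := hyD.2
            have hyna : y ≠ a := by
              rcases hab with rfl | rfl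
              exacts [hxnb i hi1 hi2 y hyB (i-1) (by omega), hxnb i hi1 hi2 y hyB i hi2]
            have hmin := hCmin a c hac z hz y hyna hync hyC
            have u1 : gdistW H wt a y ≤ 1 := by
              rcases hab with rfl | rfl
              · refine le_trans (dub _ _ (adjBl i hi1 hi2 y hyB).symm) ?_
                rw [hwtsymm]
                exact (hw6 i hi1 hi2 y hyB).1.le
              · refine le_trans (dub _ _ (adjBr i hi1 hi2 y hyB).symm) ?_
                rw [hwtsymm]
                exact (hw6 i hi1 hi2 y hyB).2.le
            have u2 : gdistW H wt y c ≤ ε :=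
              le_trans (dub _ _ (adjBB i hi1 hi2 y hyB c hcB hync))
                (hw5 i hi1 hi2 y hyB c hcB hync).le
            have h1 : 1 ≤ gdistW H wt a z := by
              rcases hab with rfl | rfl
              exacts [(dxb m hm1 hm2 z hzB (i-1) (by omega)).1.2,
                (dxb m hm1 hm2 z hzB i hi2).1.2]
            have h2 := dBB m i hm1 hm2 hi1 hi2 hmi z hzB c hcB
            linarith
  -- b 0 and b f are not adjacent in G
  have noGbf : ¬ G.Adj (b 0) (b f) := by
    have nbr0 : ∀ c, (H.deleteEdges {s(b 0, b f)}).Adj (b 0) c → c = b 1 ∨ c ∈ B 1 := by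
      intro c h
      rcases classifyE _ _ h with ⟨j, hjf, ⟨ha, hc⟩ | ⟨ha, hc⟩⟩ | ⟨i, hi1, hi2, haB, _, _⟩ |
        ⟨i, hi1, hi2, ⟨haB, _⟩ | ⟨hcB, ha⟩⟩
      · have hj0 : 0 = j := hbinj 0 (by omega) j (by omega) ha
        left; rw [hc, ← hj0]
      · have : 0 = j + 1 := hbinj 0 (by omega) (j+1) hjf ha
        omega
      · exact absurd haB (hbB i hi1 hi2 0 (by omega))
      · exact absurd haB (hbB i hi1 hi2 0 (by omega))
      · rcases ha with ha | ha
        · have h0 : 0 = i - 1 := hbinj 0 (by omega) (i-1) (by omega) ha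
          have hi : i = 1 := by omega
          right; rw [← hi]; exact hcB
        · have : 0 = i := hbinj 0 (by omega) i hi2 ha
          omega
    have nbrf : ∀ c, (H.deleteEdges {s(b 0, b f)}).Adj (b f) c → c = b (f-1) ∨ c ∈ B f := by
      intro c h
      rcases classifyE _ _ h with ⟨j, hjf, ⟨ha, hc⟩ | ⟨ha, hc⟩⟩ | ⟨i, hi1, hi2, haB, _, _⟩ |
        ⟨i, hi1, hi2, ⟨haB, _⟩ | ⟨hcB, ha⟩⟩
      · have : f = j := hbinj f le_rfl j (by omega) ha
        omega
      · have hj : f = j + 1 := hbinj f le_rfl (j+1) hjf ha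
        left; rw [hc]; congr 1; omega
      · exact absurd haB (hbB i hi1 hi2 f le_rfl)
      · exact absurd haB (hbB i hi1 hi2 f le_rfl)
      · rcases ha with ha | ha
        · have : f = i - 1 := hbinj f le_rfl (i-1) (by omega) ha
          omega
        · have hi : f = i := hbinj f le_rfl i hi2 ha
          right; rw [hi]; exact hcB
    have N1 : ∀ c, (H.deleteEdges {s(b 0, b f)}).Adj (b 0) c → b f ∉ C (b 0) c := by
      intro c hac hmem
      have hCc := hCcard _ _ hac
      rcases nbr0 c hac with rfl | hcB
      · -- c = b 1
        have hzS : b f ∉ B 1 := hbB 1 (by omega) (by omega) f le_rfl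
        obtain ⟨y, hyB, hyC⟩ := exists_mem_not_mem
          (show (C (b 0) (b 1)).ncard ≤ (B 1).ncard by
            rw [hCc, hBcard 1 (by omega) (by omega)]; omega)
          (Set.toFinite _) (Set.toFinite _) hmem hzS
        have hy0 : y ≠ b 0 := hxnb 1 (by omega) (by omega) y hyB 0 (by omega)
        have hy1 : y ≠ b 1 := hxnb 1 (by omega) (by omega) y hyB 1 (by omega)
        have hmin := hCmin _ _ hac (b f) hmem y hy0 hy1 hyC
        have hadj0 : H.Adj y (b 0) := by
          have h' := adjBl 1 (by omega) (by omega) y hyB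
          rwa [show (1:ℕ) - 1 = 0 from rfl] at h'
        have hw0 : wt y (b 0) = 1 := by
          have h' := (hw6 1 (by omega) (by omega) y hyB).1
          rwa [show (1:ℕ) - 1 = 0 from rfl] at h'
        have u1 : gdistW H wt (b 0) y ≤ 1 := by
          refine le_trans (dub _ _ hadj0.symm) ?_
          rw [hwtsymm (b 0) y, hw0]
        have u2 : gdistW H wt y (b 1) ≤ 1 :=
          le_trans (dub _ _ (adjBr 1 (by omega) (by omega) y hyB)) (hw6 1 (by omega) (by omega) y hyB).2.le
        have l1 := d0f.1
        have l2 := (indpot f le_rfl (Or.inr rfl) 1 (by omega) (by omega)).1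
        linarith
      · -- c ∈ B 1
        have hzS : b f ∉ B 1 \ {c} := fun h => (hbB 1 (by omega) (by omega) f le_rfl) h.1
        obtain ⟨y, hyD, hyC⟩ := exists_mem_not_mem
          (show (C (b 0) c).ncard ≤ (B 1 \ {c}).ncard by
            rw [hCc, Set.ncard_diff_singleton_of_mem hcB,
              hBcard 1 (by omega) (by omega)])
          (Set.toFinite _) (Set.toFinite _) hmem hzS
        have hyB : y ∈ B 1 := hyD.1
        have hync : y ≠ c := hyD.2
        have hy0 : y ≠ b 0 := hxnb 1 (by omega) (by omega) y hyB 0 (by omega)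
        have hmin := hCmin _ _ hac (b f) hmem y hy0 hync hyC
        have hadj0 : H.Adj y (b 0) := by
          have h' := adjBl 1 (by omega) (by omega) y hyB
          rwa [show (1:ℕ) - 1 = 0 from rfl] at h'
        have hw0 : wt y (b 0) = 1 := by
          have h' := (hw6 1 (by omega) (by omega) y hyB).1
          rwa [show (1:ℕ) - 1 = 0 from rfl] at h'
        have u1 : gdistW H wt (b 0) y ≤ 1 := by
          refine le_trans (dub _ _ hadj0.symm) ?_
          rw [hwtsymm (b 0) y, hw0]
        have u2 : gdistW H wt y c ≤ ε :=
          le_trans (dub _ _ (adjBB 1 (by omega) (by omega) y hyB c hcB hync))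
            (hw5 1 (by omega) (by omega) y hyB c hcB hync).le
        have l1 := d0f.1
        have l2 := (dxb 1 (by omega) (by omega) c hcB f le_rfl).1.2
        linarith
    have N2 : ∀ c, (H.deleteEdges {s(b 0, b f)}).Adj (b f) c → b 0 ∉ C (b f) c := by
      intro c hac hmem
      have hCc := hCcard _ _ hac
      rcases nbrf c hac with rfl | hcB
      · -- c = b (f-1)
        have hzS : b 0 ∉ B f := hbB f (by omega) le_rfl 0 (by omega)
        obtain ⟨y, hyB, hyC⟩ := exists_mem_not_mem
          (show (C (b f) (b (f-1))).ncard ≤ (B f).ncard by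
            rw [hCc, hBcard f (by omega) le_rfl]; omega)
          (Set.toFinite _) (Set.toFinite _) hmem hzS
        have hyf : y ≠ b f := hxnb f (by omega) le_rfl y hyB f le_rfl
        have hyf1 : y ≠ b (f-1) := hxnb f (by omega) le_rfl y hyB (f-1) (by omega)
        have hmin := hCmin _ _ hac (b 0) hmem y hyf hyf1 hyC
        have u1 : gdistW H wt (b f) y ≤ 1 := by
          refine le_trans (dub _ _ (adjBr f (by omega) le_rfl y hyB).symm) ?_
          rw [hwtsymm]
          exact (hw6 f (by omega) le_rfl y hyB).2.le
        have u2 : gdistW H wt y (b (f-1)) ≤ 1 :=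
          le_trans (dub _ _ (adjBl f (by omega) le_rfl y hyB)) (hw6 f (by omega) le_rfl y hyB).1.le
        have l1 := d0f.2
        have l2 := (indpot 0 (by omega) (Or.inl rfl) (f-1) (by omega) (by omega)).1
        linarith
      · -- c ∈ B f
        have hzS : b 0 ∉ B f \ {c} := fun h => (hbB f (by omega) le_rfl 0 (by omega)) h.1
        obtain ⟨y, hyD, hyC⟩ := exists_mem_not_mem
          (show (C (b f) c).ncard ≤ (B f \ {c}).ncard by
            rw [hCc, Set.ncard_diff_singleton_of_mem hcB,
              hBcard f (by omega) le_rfl])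
          (Set.toFinite _) (Set.toFinite _) hmem hzS
        have hyB : y ∈ B f := hyD.1
        have hync : y ≠ c := hyD.2
        have hyf : y ≠ b f := hxnb f (by omega) le_rfl y hyB f le_rfl
        have hmin := hCmin _ _ hac (b 0) hmem y hyf hync hyC
        have u1 : gdistW H wt (b f) y ≤ 1 := by
          refine le_trans (dub _ _ (adjBr f (by omega) le_rfl y hyB).symm) ?_
          rw [hwtsymm]
          exact (hw6 f (by omega) le_rfl y hyB).2.le
        have u2 : gdistW H wt y c ≤ ε :=
          le_trans (dub _ _ (adjBB f (by omega) le_rfl y hyB c hcB hync))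
            (hw5 f (by omega) le_rfl y hyB c hcB hync).le
        have l1 := d0f.2
        have l2 := (dxb f (by omega) le_rfl c hcB 0 (by omega)).1.2
        linarith
    intro hGadj
    rcases (hG _ _).1 hGadj with h | ⟨a, c, hac, hcomb⟩
    · rw [SimpleGraph.deleteEdges_adj] at h
      exact h.2 rfl
    · rcases hcomb with ⟨ha, hmem⟩ | ⟨ha, hmem⟩ | ⟨ha, hmem⟩ | ⟨ha, hmem⟩
      · exact N1 c (ha ▸ hac) (ha ▸ hmem)
      · have hac' : (H.deleteEdges {s(b 0, b f)}).Adj (b 0) a := ha ▸ hac.symm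
        have hmem' : b f ∈ C (b 0) a := by
          rw [hCsymm a c] at hmem
          exact ha ▸ hmem
        exact N1 a hac' hmem'
      · exact N2 c (ha ▸ hac) (ha ▸ hmem)
      · have hac' : (H.deleteEdges {s(b 0, b f)}).Adj (b f) a := ha ▸ hac.symm
        have hmem' : b 0 ∈ C (b f) a := by
          rw [hCsymm a c] at hmem
          exact ha ▸ hmem
        exact N2 a hac' hmem'
  -- the fault set
  refine ⟨{e | e ∈ G.edgeSet ∧ ∀ v ∈ e, ∃ j ≤ f, v = b j}, fun e he => he.1, ?_, fun e => Iff.rfl, ?_⟩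
  · -- max degree at most f
    intro v
    by_cases hv : ∃ j, j ≤ f ∧ v = b j
    · obtain ⟨j, hj, rfl⟩ := hv
      have hsub : {e | e ∈ {e : Sym2 V | e ∈ G.edgeSet ∧ ∀ v ∈ e, ∃ j ≤ f, v = b j} ∧ b j ∈ e}
          ⊆ (fun k => s(b j, b k)) '' {k | k ≤ f ∧ k ≠ j} := by
        rintro e ⟨⟨heG, hall⟩, hve⟩
        obtain ⟨y, rfl⟩ := Sym2.mem_iff_exists.mp hve
        obtain ⟨k, hk, rfl⟩ := hall y (Sym2.mem_iff.mpr (Or.inr rfl))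
        refine ⟨k, ⟨hk, ?_⟩, rfl⟩
        rintro rfl
        exact G.irrefl ((SimpleGraph.mem_edgeSet G).mp heG)
      refine le_trans (Set.encard_mono hsub) (le_trans (Set.encard_image_le _ _) ?_)
      have he : {k | k ≤ f ∧ k ≠ j} = (((Finset.range (f+1)).erase j : Finset ℕ) : Set ℕ) := by
        ext k
        simp only [Set.mem_setOf_eq, Finset.coe_erase, Set.mem_diff, Finset.coe_range,
          Set.mem_Iio, Set.mem_singleton_iff]
        omega
      rw [he, Set.encard_coe_eq_coe_finsetCard,
        Finset.card_erase_of_mem (by simp only [Finset.mem_range]; omega), Finset.card_range]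
      norm_cast
    · have hempty : {e | e ∈ {e : Sym2 V | e ∈ G.edgeSet ∧ ∀ v ∈ e, ∃ j ≤ f, v = b j} ∧ v ∈ e}
          = ∅ := by
        ext e
        simp only [Set.mem_setOf_eq, Set.mem_empty_iff_false, iff_false, not_and]
        rintro ⟨_, hall⟩ hve
        exact hv (hall v hve)
      rw [hempty]
      simp
  · -- main stretch inequality
    set F₀ : Set (Sym2 V) := {e | e ∈ G.edgeSet ∧ ∀ v ∈ e, ∃ j ≤ f, v = b j} with hF₀
    have hb0f : b 0 ≠ b f := hbne 0 f (by omega) le_rfl (by omega)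
    -- edges of the canonical walk survive in G \ F₀
    have gadj : ∀ i, 1 ≤ i → i ≤ f → ∀ x ∈ B i,
        (G.deleteEdges F₀).Adj (b (i-1)) x ∧ (G.deleteEdges F₀).Adj x (b i) := by
      intro i h1 h2 x hx
      have hxb : ∀ k, k ≤ f → x ≠ b k := hxnb i h1 h2 x hx
      have mkadj : ∀ t, t ≤ f → H.Adj x (b t) → (G.deleteEdges F₀).Adj x (b t) := by
        intro t ht hadj
        have hns : s(x, b t) ∉ ({s(b 0, b f)} : Set (Sym2 V)) := by
          simp only [Set.mem_singleton_iff, Sym2.eq_iff]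
          rintro (⟨h1', h2'⟩ | ⟨h1', h2'⟩)
          · exact hxb 0 (by omega) h1'
          · exact hxb f le_rfl h1'
        have hH' : (H.deleteEdges {s(b 0, b f)}).Adj x (b t) := by
          rw [SimpleGraph.deleteEdges_adj]
          exact ⟨hadj, hns⟩
        have hGx : G.Adj x (b t) := (hG _ _).2 (Or.inl hH')
        rw [SimpleGraph.deleteEdges_adj]
        refine ⟨hGx, ?_⟩
        intro hmem
        obtain ⟨k, hk, he⟩ := hmem.2 x (Sym2.mem_iff.mpr (Or.inl rfl))
        exact hxb k hk he
      exact ⟨(mkadj (i-1) (by omega) (adjBl i h1 h2 x hx)).symm,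
        mkadj i h2 (adjBr i h1 h2 x hx)⟩
    have wGF : Nonempty ((G.deleteEdges F₀).Walk (b 0) (b f)) := by
      have key : ∀ j, j ≤ f → Nonempty ((G.deleteEdges F₀).Walk (b 0) (b j)) := by
        intro j
        induction j with
        | zero => exact fun _ => ⟨SimpleGraph.Walk.nil⟩
        | succ n ih =>
          intro hn
          obtain ⟨x, hx⟩ : (B (n+1)).Nonempty := by
            apply Set.nonempty_of_ncard_ne_zero
            rw [hBcard (n+1) (by omega) hn]
            omega
          obtain ⟨g1, g2⟩ := gadj (n+1) (by omega) hn x hx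
          rw [show n + 1 - 1 = n from by omega] at g1
          exact ⟨((ih (by omega)).some.concat g1).concat g2⟩
      exact key f le_rfl
    -- structure of surviving edges
    have star : ∀ x y : V, (G.deleteEdges F₀).Adj x y →
        (∃ i, 1 ≤ i ∧ i ≤ f ∧ x ∈ B i ∧ y ∈ B i) ∨
        (∃ i, 1 ≤ i ∧ i ≤ f ∧
          ((x ∈ B i ∧ (y = b (i-1) ∨ y = b i)) ∨ (y ∈ B i ∧ (x = b (i-1) ∨ x = b i)))) := by
      intro x y hxy
      rw [SimpleGraph.deleteEdges_adj] at hxy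
      obtain ⟨hGxy, hnF⟩ := hxy
      have hnotbb : ¬((∃ j, j ≤ f ∧ x = b j) ∧ (∃ k, k ≤ f ∧ y = b k)) := by
        rintro ⟨hx, hy⟩
        apply hnF
        refine ⟨(SimpleGraph.mem_edgeSet G).mpr hGxy, ?_⟩
        intro v hv
        rcases Sym2.mem_iff.mp hv with rfl | rfl
        exacts [hx, hy]
      rcases (hG x y).1 hGxy with h | ⟨a, c, hac, hcomb⟩
      · rcases classifyE x y h with ⟨j, hjf, hor⟩ | hBB | hBb
        · refine absurd ?_ hnotbb
          rcases hor with ⟨h1, h2⟩ | ⟨h1, h2⟩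
          exacts [⟨⟨j, by omega, h1⟩, ⟨j+1, hjf, h2⟩⟩, ⟨⟨j+1, hjf, h1⟩, ⟨j, by omega, h2⟩⟩]
        · obtain ⟨i, h1, h2, hx, hy, _⟩ := hBB
          exact Or.inl ⟨i, h1, h2, hx, hy⟩
        · exact Or.inr hBb
      · rcases hcomb with ⟨hxa, hyC⟩ | ⟨hxa, hyC⟩ | ⟨hya, hxC⟩ | ⟨hya, hxC⟩
        · subst hxa
          rcases helperC x c hac y hyC with ⟨hxb, hyb⟩ | hmid | hlast
          · exact absurd ⟨hxb, hyb⟩ hnotbb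
          · exact Or.inl hmid
          · exact Or.inr hlast
        · subst hxa
          have hyC' : y ∈ C x a := by rw [hCsymm a x] at hyC; exact hyC
          rcases helperC x a hac.symm y hyC' with ⟨hxb, hyb⟩ | hmid | hlast
          · exact absurd ⟨hxb, hyb⟩ hnotbb
          · exact Or.inl hmid
          · exact Or.inr hlast
        · subst hya
          rcases helperC y c hac x hxC with ⟨hyb, hxb⟩ | ⟨i, h1, h2, hyB, hxB⟩ |
            ⟨i, h1, h2, hor⟩
          · exact absurd ⟨hxb, hyb⟩ hnotbb
          · exact Or.inl ⟨i, h1, h2, hxB, hyB⟩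
          · right
            refine ⟨i, h1, h2, ?_⟩
            rcases hor with ⟨h3, h4⟩ | ⟨h3, h4⟩
            exacts [Or.inr ⟨h3, h4⟩, Or.inl ⟨h3, h4⟩]
        · subst hya
          have hxC' : x ∈ C y a := by rw [hCsymm a y] at hxC; exact hxC
          rcases helperC y a hac.symm x hxC' with ⟨hyb, hxb⟩ | ⟨i, h1, h2, hyB, hxB⟩ |
            ⟨i, h1, h2, hor⟩
          · exact absurd ⟨hxb, hyb⟩ hnotbb
          · exact Or.inl ⟨i, h1, h2, hxB, hyB⟩
          · right
            refine ⟨i, h1, h2, ?_⟩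
            rcases hor with ⟨h3, h4⟩ | ⟨h3, h4⟩
            exacts [Or.inr ⟨h3, h4⟩, Or.inl ⟨h3, h4⟩]
    -- final potential
    set βΦ : ℕ → ℝ := fun i => 2*(i:ℝ) - 1 with hβΦ
    set γΦ : ℕ → ℝ := fun j => 2*(j:ℝ) with hγΦ
    have lipGF : ∀ x y, (G.deleteEdges F₀).Adj x y →
        |phi f b B βΦ γΦ x - phi f b B βΦ γΦ y| ≤ gdistW H wt x y := by
      intro x y hxy
      rcases star x y hxy with ⟨i, h1, h2, hx, hy⟩ | ⟨i, h1, h2, hor⟩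
      · rw [phi_mem hBdisj βΦ γΦ h1 h2 hx, phi_mem hBdisj βΦ γΦ h1 h2 hy, sub_self, abs_zero]
        exact dnn x y
      · have hcast : ((i - 1 : ℕ) : ℝ) = (i : ℝ) - 1 := by
          rw [Nat.cast_sub h1, Nat.cast_one]
        rcases hor with ⟨hx, rfl | rfl⟩ | ⟨hy, rfl | rfl⟩
        · rw [phi_mem hBdisj βΦ γΦ h1 h2 hx, phi_b hbB hbinj βΦ γΦ (by omega : i - 1 ≤ f)]
          simp only [hβΦ, hγΦ]
          rw [hcast, show 2*(i:ℝ) - 1 - 2*((i:ℝ) - 1) = 1 by ring, abs_one]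
          exact (dxb i h1 h2 x hx (i-1) (by omega)).1.1
        · rw [phi_mem hBdisj βΦ γΦ h1 h2 hx, phi_b hbB hbinj βΦ γΦ h2]
          simp only [hβΦ, hγΦ]
          rw [show 2*(i:ℝ) - 1 - 2*(i:ℝ) = -1 by ring, abs_neg, abs_one]
          exact (dxb i h1 h2 x hx i h2).1.1
        · rw [phi_b hbB hbinj βΦ γΦ (by omega : i - 1 ≤ f), phi_mem hBdisj βΦ γΦ h1 h2 hy]
          simp only [hβΦ, hγΦ]
          rw [hcast, show 2*((i:ℝ) - 1) - (2*(i:ℝ) - 1) = -1 by ring, abs_neg, abs_one]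
          exact (dxb i h1 h2 y hy (i-1) (by omega)).1.2
        · rw [phi_b hbB hbinj βΦ γΦ h2, phi_mem hBdisj βΦ γΦ h1 h2 hy]
          simp only [hβΦ, hγΦ]
          rw [show 2*(i:ℝ) - (2*(i:ℝ) - 1) = 1 by ring, abs_one]
          exact (dxb i h1 h2 y hy i h2).1.2
    have hphib0 : phi f b B βΦ γΦ (b 0) = 0 := by
      rw [phi_b hbB hbinj βΦ γΦ (Nat.zero_le f)]
      simp [hγΦ]
    have hphibf : phi f b B βΦ γΦ (b f) = 2*(f:ℝ) := by
      rw [phi_b hbB hbinj βΦ γΦ le_rfl]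
    have rhs : 2*(f:ℝ) ≤ gdistW (G.deleteEdges F₀) (fun x y => gdistW H wt x y) (b 0) (b f) := by
      refine le_gdistW wGF.some ?_
      intro w
      have hbd := wlenW_lb (W := fun x y => gdistW H wt x y) lipGF w
      rw [hphib0, hphibf, zero_sub, abs_neg, abs_of_nonneg (by positivity)] at hbd
      exact hbd
    have hadjT : ((⊤ : SimpleGraph V).deleteEdges F₀).Adj (b 0) (b f) := by
      rw [SimpleGraph.deleteEdges_adj]
      refine ⟨by rw [SimpleGraph.top_adj]; exact hb0f, ?_⟩
      intro hmem
      exact noGbf ((SimpleGraph.mem_edgeSet G).mp hmem.1)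
    have h0T : ∀ x y : V, ((⊤ : SimpleGraph V).deleteEdges F₀).Adj x y →
        0 ≤ gdistW H wt x y := fun x y _ => dnn x y
    have lhs_le : gdistW ((⊤ : SimpleGraph V).deleteEdges F₀) (fun x y => gdistW H wt x y)
        (b 0) (b f) ≤ 1 + ε := by
      have h' := gdistW_le_wlenW (W := fun x y => gdistW H wt x y) h0T
        (SimpleGraph.Walk.cons hadjT SimpleGraph.Walk.nil)
      rw [wlenW_cons, wlenW_nil, add_zero] at h'
      exact le_trans h' (le_trans (dub _ _ adj0f) (le_of_eq hw1))
    have step1 : (f : ℝ) * gdistW ((⊤ : SimpleGraph V).deleteEdges F₀)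
        (fun x y => gdistW H wt x y) (b 0) (b f) ≤ (f : ℝ) * (1 + ε) :=
      mul_le_mul_of_nonneg_left lhs_le (by positivity)
    have step2 : (f : ℝ) * (1 + ε) ≤ 2*(f:ℝ) := by nlinarith
    linarith [rhs, step1, step2]
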